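/- Let F = ∪_{i=1}^k S_{d_i} be a star forest with k ≥ 2 and d_1 ≥ ⋯ ≥ d_k ≥ 1. If G is an F-free graph of order n, then the set C = {v ∈ V(G) : d(v) ≥ Σ_{i=1}^k d_i + k - 1} has at most k-1 elements. -/

import Mathlib

open SimpleGraph

attribute [local instance] Classical.propDecidable

/-- The star forest `⋃ i, S_(d i)`; in component `i` the vertex `0` is the center. -/
def starForest (k : ℕ) (d : Fin k → ℕ) : SimpleGraph (Σ i : Fin k, Fin (d i + 1)) where
  Adj x y := x.1 = y.1 ∧ x ≠ y ∧ ((x.2 : ℕ) = 0 ∨ (y.2 : ℕ) = 0)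
  symm := ⟨by rintro x y ⟨h1, h2, h3⟩; exact ⟨h1.symm, h2.symm, h3.symm⟩⟩
  loopless := ⟨by rintro x ⟨_, h, _⟩; exact h rfl⟩

/-- `G` contains a copy of `F` as a subgraph. -/
def Contains {V W : Type*} (G : SimpleGraph V) (F : SimpleGraph W) : Prop :=
  ∃ f : W ↪ V, ∀ ⦃a b⦄, F.Adj a b → G.Adj (f a) (f b)

set_option maxHeartbeats 1000000 in
theorem stmt6 (k n : ℕ) (hk : 2 ≤ k) (d : Fin k → ℕ)
    (hmono : ∀ i j : Fin k, i ≤ j → d j ≤ d i) (hd : ∀ i, 1 ≤ d i)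
    (G : SimpleGraph (Fin n)) (hfree : ¬ Contains G (starForest k d)) :
    (Finset.univ.filter fun v => ∑ i, d i + k - 1 ≤ G.degree v).card ≤ k - 1 := by
  classical
  by_contra hbig
  push_neg at hbig
  set bigs := Finset.univ.filter fun v => ∑ i, d i + k - 1 ≤ G.degree v with hbigs
  have hkcard : k ≤ bigs.card := by omega
  obtain ⟨s', hs'sub, hs'card⟩ := Finset.exists_subset_card_eq hkcard
  set e := s'.orderIsoOfFin hs'card with he
  set c : Fin k → Fin n := fun i => (e i : Fin n) with hc
  have hcinj : Function.Injective c := fun a b h => e.injective (Subtype.ext h)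
  have hcdeg : ∀ i, ∑ t, d t + k - 1 ≤ G.degree (c i) := by
    intro i
    have : c i ∈ bigs := hs'sub (e i).2
    simpa [hbigs] using (Finset.mem_filter.mp this).2
  set Cset : Finset (Fin n) := Finset.univ.image c with hCset
  have hCcard : Cset.card ≤ k := le_trans Finset.card_image_le (by simp)
  have hcmem : ∀ i, c i ∈ Cset := fun i => Finset.mem_image_of_mem c (Finset.mem_univ i)
  -- Greedy construction of disjoint leaf sets
  have key : ∀ m, m ≤ k → ∃ S : Fin k → Finset (Fin n),
      ∀ i : Fin k, (i : ℕ) < m →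
        (S i ⊆ G.neighborFinset (c i) ∧ (S i).card = d i ∧ Disjoint (S i) Cset ∧
          ∀ j : Fin k, (j : ℕ) < m → j ≠ i → Disjoint (S i) (S j)) := by
    intro m
    induction m with
    | zero => intro _; exact ⟨fun _ => ∅, fun i hi => absurd hi (by omega)⟩
    | succ m ih =>
      intro hm1
      obtain ⟨S, hS⟩ := ih (by omega)
      set i₀ : Fin k := ⟨m, by omega⟩ with hi₀
      set filt : Finset (Fin k) := Finset.univ.filter (fun j => (j : ℕ) < m) with hfilt
      set B : Finset (Fin n) := filt.biUnion S with hB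
      set N : Finset (Fin n) := G.neighborFinset (c i₀) with hN
      set F : Finset (Fin n) := (Cset.erase (c i₀)) ∪ B with hF
      have hBcard : B.card ≤ ∑ j ∈ filt, d j := by
        refine le_trans (Finset.card_biUnion_le) (Finset.sum_le_sum ?_)
        intro j hj
        exact le_of_eq (hS j (Finset.mem_filter.mp hj).2).2.1
      have hsum : ∑ j ∈ filt, d j + d i₀ ≤ ∑ t, d t := by
        have hnotmem : i₀ ∉ filt := by simp [hfilt, hi₀]
        have : ∑ j ∈ insert i₀ filt, d j ≤ ∑ t, d t :=
          Finset.sum_le_sum_of_subset (Finset.subset_univ _)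
        rw [Finset.sum_insert hnotmem] at this
        omega
      have hFcard : F.card ≤ k - 1 + ∑ j ∈ filt, d j := by
        have h1 : (Cset.erase (c i₀)).card ≤ k - 1 := by
          have := Finset.card_erase_of_mem (hcmem i₀)
          omega
        calc F.card ≤ (Cset.erase (c i₀)).card + B.card := Finset.card_union_le _ _
          _ ≤ k - 1 + ∑ j ∈ filt, d j := by omega
      have hNcard : ∑ t, d t + k - 1 ≤ N.card := by
        rw [hN, G.card_neighborFinset_eq_degree]; exact hcdeg i₀
      have havail : d i₀ ≤ (N \ F).card := by
        have := Finset.card_le_card_sdiff_add_card (s := N) (t := F)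
        omega
      obtain ⟨T, hTsub, hTcard⟩ := Finset.exists_subset_card_eq havail
      have hTN : T ⊆ N := fun x hx => (Finset.mem_sdiff.mp (hTsub hx)).1
      have hTF : Disjoint T F := by
        rw [Finset.disjoint_left]
        intro x hx hxF
        exact (Finset.mem_sdiff.mp (hTsub hx)).2 hxF
      have hTC : Disjoint T Cset := by
        rw [Finset.disjoint_left]
        intro x hx hxC
        by_cases hxc : x = c i₀
        · have hxN : x ∈ N := hTN hx
          rw [hN, SimpleGraph.mem_neighborFinset, hxc] at hxN
          exact G.loopless.irrefl _ hxN
        · exact (Finset.disjoint_left.mp hTF) hx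
            (Finset.mem_union_left _ (Finset.mem_erase.mpr ⟨hxc, hxC⟩))
      have hTS : ∀ j : Fin k, (j : ℕ) < m → Disjoint T (S j) := by
        intro j hj
        refine Finset.disjoint_left.mpr fun x hx hxS => ?_
        exact (Finset.disjoint_left.mp hTF) hx
          (Finset.mem_union_right _ (Finset.mem_biUnion.mpr
            ⟨j, Finset.mem_filter.mpr ⟨Finset.mem_univ _, hj⟩, hxS⟩))
      refine ⟨Function.update S i₀ T, ?_⟩
      intro i hi
      by_cases hii : i = i₀
      · subst hii
        rw [Function.update_self]
        refine ⟨hTN, hTcard, hTC, ?_⟩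
        intro j hj hji
        have hjm : (j : ℕ) < m := by
          rcases Nat.lt_succ_iff_lt_or_eq.mp hj with h | h
          · exact h
          · exact absurd (Fin.ext h) hji
        rw [Function.update_of_ne hji]
        exact hTS j hjm
      · have him : (i : ℕ) < m := by
          rcases Nat.lt_succ_iff_lt_or_eq.mp hi with h | h
          · exact h
          · exact absurd (Fin.ext h) hii
        rw [Function.update_of_ne hii]
        obtain ⟨h1, h2, h3, h4⟩ := hS i him
        refine ⟨h1, h2, h3, ?_⟩
        intro j hj hji
        by_cases hjj : j = i₀
        · subst hjj
          rw [Function.update_self]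
          exact (hTS i him).symm
        · have hjm : (j : ℕ) < m := by
            rcases Nat.lt_succ_iff_lt_or_eq.mp hj with h | h
            · exact h
            · exact absurd (Fin.ext h) hjj
          rw [Function.update_of_ne hjj]
          exact h4 j hjm hji
  obtain ⟨S, hS⟩ := key k le_rfl
  have hSprop : ∀ i : Fin k, S i ⊆ G.neighborFinset (c i) ∧ (S i).card = d i ∧
      Disjoint (S i) Cset ∧ ∀ j : Fin k, j ≠ i → Disjoint (S i) (S j) := by
    intro i
    obtain ⟨h1, h2, h3, h4⟩ := hS i i.isLt
    exact ⟨h1, h2, h3, fun j hj => h4 j j.isLt hj⟩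
  -- leaf enumeration
  set L : (i : Fin k) → Fin (d i) → Fin n :=
    fun i j => ((S i).orderIsoOfFin (hSprop i).2.1 j : Fin n) with hL
  have hLmem : ∀ i j, L i j ∈ S i := fun i j => ((S i).orderIsoOfFin (hSprop i).2.1 j).2
  have hLinj : ∀ i, Function.Injective (L i) :=
    fun i a b h => ((S i).orderIsoOfFin (hSprop i).2.1).injective (Subtype.ext h)
  -- the embedding
  set f : (Σ i : Fin k, Fin (d i + 1)) → Fin n :=
    fun x => if h : (x.2 : ℕ) = 0 then c x.1 else L x.1 ⟨(x.2 : ℕ) - 1, by omega⟩ with hf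
  have hfinj : Function.Injective f := by
    rintro ⟨i, a⟩ ⟨j, b⟩ h
    simp only [hf] at h
    by_cases ha : (a : ℕ) = 0 <;> by_cases hb : (b : ℕ) = 0
    · rw [dif_pos ha, dif_pos hb] at h
      have hij := hcinj h
      subst hij
      congr 1
      exact Fin.ext (by omega)
    · rw [dif_pos ha, dif_neg hb] at h
      exact absurd (hcmem i) (by rw [h]; exact Finset.disjoint_left.mp (hSprop j).2.2.1 (hLmem j _))
    · rw [dif_neg ha, dif_pos hb] at h
      exact absurd (hcmem j) (by rw [← h]; exact Finset.disjoint_left.mp (hSprop i).2.2.1 (hLmem i _))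
    · rw [dif_neg ha, dif_neg hb] at h
      by_cases hij : i = j
      · subst hij
        have := hLinj i h
        have : (a : ℕ) - 1 = (b : ℕ) - 1 := congrArg Fin.val this
        congr 1
        exact Fin.ext (by omega)
      · exfalso
        have h1 : L i ⟨(a : ℕ) - 1, by omega⟩ ∈ S i := hLmem i _
        have h2 : L i ⟨(a : ℕ) - 1, by omega⟩ ∈ S j := by rw [h]; exact hLmem j _
        exact Finset.disjoint_left.mp ((hSprop i).2.2.2 j (fun hh => hij hh.symm)) h1 h2
  refine hfree ⟨⟨f, hfinj⟩, ?_⟩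
  rintro ⟨i, a⟩ ⟨j, b⟩ ⟨h1, h2, h3⟩
  obtain rfl : i = j := h1
  have hab : (a : ℕ) ≠ (b : ℕ) := fun hh => h2 (by congr 1; exact Fin.ext hh)
  have hadj : ∀ (x y : Fin (d i + 1)), (x : ℕ) = 0 → (y : ℕ) ≠ 0 →
      G.Adj (f ⟨i, x⟩) (f ⟨i, y⟩) := by
    intro x y hx hy
    simp only [hf]
    rw [dif_pos hx, dif_neg hy]
    have : L i ⟨(y : ℕ) - 1, by omega⟩ ∈ G.neighborFinset (c i) := (hSprop i).1 (hLmem i _)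
    rw [SimpleGraph.mem_neighborFinset] at this
    exact this
  rcases h3 with h3 | h3
  · exact hadj a b h3 (fun hb => hab (h3.trans hb.symm))
  · exact (hadj b a h3 (fun ha => hab (ha.trans h3.symm))).symm
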